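/- Let X₁, …, X_n be i.i.d. copies of a nonnegative random variable X with support (0, r), r ∈ (0, ∞], and let X_{(n:n)} = max{X₁, …, X_n}, so that its CDF is F(x)^n. Let α ≥ 0 and β > 0 be such that G_{X_{(n:n)}}(α, β) < ∞ and H_X(n(i+α)) < ∞ for all i ∈ ℕ₀. Then G_{X_{(n:n)}}(α, β) = Σ_{i=0}^∞ (−1)^i C(β, i) · H_X(n(i + α)), where C(β, i) = β(β−1)···(β−i+1)/i! is the generalized binomial coefficient. -/

import Mathlib

open MeasureTheory ProbabilityTheory Set

/-- The (essential) support interval of a CDF `F`: the set where `0 < F x < 1`,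
which coincides (up to endpoints) with the interval `(l, r)` where
`l = inf {x : F x > 0}` and `r = sup {x : 1 - F x > 0}`. -/
def cigfSupport (F : ℝ → ℝ) : Set ℝ := {x | 0 < F x ∧ F x < 1}

/-- The cumulative information generating function
`G_X(α, β) = ∫_l^r F(x)^α (1 - F(x))^β dx`. -/
noncomputable def cigf (F : ℝ → ℝ) (α β : ℝ) : ℝ :=
  ∫ x in cigfSupport F, F x ^ α * (1 - F x) ^ β

/-- `(α, β) ∈ D_X`, i.e. `G_X(α, β) < ∞`. -/
def memD (F : ℝ → ℝ) (α β : ℝ) : Prop :=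
  IntegrableOn (fun x => F x ^ α * (1 - F x) ^ β) (cigfSupport F)

/-- The CDF of a random variable `X` under the probability measure `P`. -/
noncomputable def rvCDF {Ω : Type*} [MeasurableSpace Ω] (P : Measure Ω) (X : Ω → ℝ) (x : ℝ) : ℝ :=
  (P {ω | X ω ≤ x}).toReal

/-- The CDF of a probability measure on `ℝ`. -/
noncomputable def cdfOf (μ : Measure ℝ) (x : ℝ) : ℝ := (μ (Iic x)).toReal

/-- The generalized binomial coefficient `C(a, n) = a(a-1)⋯(a-n+1)/n!`. -/
noncomputable def genBinom (a : ℝ) (n : ℕ) : ℝ :=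
  (∏ i ∈ Finset.range n, (a - i)) / (n.factorial : ℝ)


open scoped ENNReal NNReal

namespace Stmt14Aux

lemma genBinom_zero (a : ℝ) : genBinom a 0 = 1 := by simp [genBinom]

lemma genBinom_succ (a : ℝ) (i : ℕ) :
    genBinom a (i + 1) = genBinom a i * ((a - i) / (i + 1)) := by
  have h1 : ((i.factorial : ℝ)) ≠ 0 := Nat.cast_ne_zero.2 i.factorial_ne_zero
  have h2 : ((i : ℝ) + 1) ≠ 0 := by positivity
  simp only [genBinom, Finset.prod_range_succ, Nat.factorial_succ, Nat.cast_mul,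
    Nat.cast_add, Nat.cast_one]
  field_simp

lemma genBinom_pascal (a : ℝ) (i : ℕ) :
    genBinom a (i + 1) = genBinom (a - 1) i + genBinom (a - 1) (i + 1) := by
  have key : genBinom a (i + 1) = a * genBinom (a - 1) i / (i + 1) := by
    have h1 : ((i.factorial : ℝ)) ≠ 0 := Nat.cast_ne_zero.2 i.factorial_ne_zero
    have h2 : ((i : ℝ) + 1) ≠ 0 := by positivity
    have hp : ∏ j ∈ Finset.range (i + 1), (a - j) = (∏ j ∈ Finset.range i, (a - 1 - j)) * a := by
      rw [Finset.prod_range_succ']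
      simp only [Nat.cast_add, Nat.cast_zero, Nat.cast_one]
      congr 1
      · apply Finset.prod_congr rfl; intro j _; push_cast; ring
      · simp
    simp only [genBinom, hp, Nat.factorial_succ, Nat.cast_mul, Nat.cast_add, Nat.cast_one]
    field_simp
  rw [key, genBinom_succ]
  have h2 : ((i : ℝ) + 1) ≠ 0 := by positivity
  field_simp
  ring

noncomputable def sb (β : ℝ) (i : ℕ) : ℝ := (-1) ^ i * genBinom β i

lemma sb_succ (β : ℝ) (i : ℕ) : sb β (i + 1) = sb β i * (((i : ℝ) - β) / (i + 1)) := by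
  simp only [sb, genBinom_succ, pow_succ]
  ring

lemma sb_partial (β : ℝ) (m : ℕ) :
    ∑ i ∈ Finset.range (m + 1), sb β i = (-1) ^ m * genBinom (β - 1) m := by
  induction m with
  | zero => simp [sb, genBinom_zero]
  | succ m ih =>
      rw [Finset.sum_range_succ, ih]
      have := genBinom_pascal β m
      simp only [sb]
      rw [this]
      ring

lemma abs_genBinom_anti (β : ℝ) (hβ : 0 < β) {m : ℕ} (hm : β ≤ m + 1) :
    |genBinom (β - 1) (m + 1)| ≤ |genBinom (β - 1) m| := by
  rw [genBinom_succ, abs_mul]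
  have h1 : |(β - 1 - m) / (m + 1)| ≤ 1 := by
    rw [abs_div, div_le_one (by positivity)]
    rw [abs_of_pos (by positivity : (0:ℝ) < (m:ℝ) + 1), abs_le]
    constructor <;> nlinarith
  calc |genBinom (β - 1) m| * |(β - 1 - ↑m) / (↑m + 1)| ≤ |genBinom (β - 1) m| * 1 := by
        exact mul_le_mul_of_nonneg_left h1 (abs_nonneg _)
    _ = _ := mul_one _

lemma abs_genBinom_bounded (β : ℝ) (hβ : 0 < β) :
    ∃ M : ℝ, ∀ m : ℕ, |genBinom (β - 1) m| ≤ M := by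
  set N : ℕ := ⌈β⌉₊ with hN
  have hβN : β ≤ N := Nat.le_ceil β
  -- after N, antitone
  have key : ∀ k : ℕ, |genBinom (β - 1) (N + k)| ≤ |genBinom (β - 1) N| := by
    intro k
    induction k with
    | zero => rfl
    | succ k ih =>
        have : β ≤ (N + k : ℕ) + 1 := by push_cast; linarith [Nat.cast_nonneg (α := ℝ) k]
        have h := abs_genBinom_anti β hβ (m := N + k) this
        calc |genBinom (β - 1) (N + (k+1))| = |genBinom (β - 1) ((N + k) + 1)| := by ring_nf
          _ ≤ |genBinom (β - 1) (N + k)| := h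
          _ ≤ _ := ih
  refine ⟨∑ j ∈ Finset.range (N + 1), |genBinom (β - 1) j|, fun m => ?_⟩
  rcases le_or_gt m N with hm | hm
  · exact Finset.single_le_sum (f := fun j => |genBinom (β - 1) j|)
      (fun j _ => abs_nonneg _) (Finset.mem_range.2 (Nat.lt_succ_of_le hm))
  · obtain ⟨k, rfl⟩ := Nat.exists_eq_add_of_le hm.le
    calc |genBinom (β - 1) (N + k)| ≤ |genBinom (β - 1) N| := key k
      _ ≤ _ := Finset.single_le_sum (f := fun j => |genBinom (β - 1) j|)
          (fun j _ => abs_nonneg _) (Finset.mem_range.2 (Nat.lt_succ_of_le le_rfl))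

lemma summable_abs_sb (β : ℝ) (hβ : 0 < β) : Summable (fun i => |sb β i|) := by
  obtain ⟨M, hM⟩ := abs_genBinom_bounded β hβ
  set N : ℕ := ⌈β⌉₊ with hN
  have hβN : β ≤ N := Nat.le_ceil β
  -- sign constancy from N on
  set ε : ℝ := if 0 ≤ sb β N then 1 else -1 with hε
  have hsign : ∀ k : ℕ, |sb β (N + k)| = ε * sb β (N + k) := by
    intro k
    induction k with
    | zero =>
        by_cases h : 0 ≤ sb β N
        · simp [hε, h, abs_of_nonneg h]
        · simp [hε, h, abs_of_neg (lt_of_not_ge h)]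
    | succ k ih =>
        have hnn : (0:ℝ) ≤ ((N + k : ℕ) : ℝ) - β := by push_cast; linarith [Nat.cast_nonneg (α := ℝ) k]
        have hfac : (0:ℝ) ≤ (((N + k : ℕ) : ℝ) - β) / ((N + k : ℕ) + 1) := by positivity
        have hrec : sb β (N + (k + 1)) = sb β (N + k) * ((((N + k : ℕ) : ℝ) - β) / ((N + k : ℕ) + 1)) := by
          have := sb_succ β (N + k)
          convert this using 2 <;> push_cast <;> ring
        rw [hrec, abs_mul, abs_of_nonneg hfac, ih]
        ring
  -- partial sums bounded
  have hbound : ∀ m : ℕ, ∑ k ∈ Finset.range m, |sb β (N + k)| ≤ 2 * M + 2 * M := by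
    intro m
    have hps : ∀ p : ℕ, |∑ i ∈ Finset.range p, sb β i| ≤ 2 * M := by
      intro p
      cases p with
      | zero => simp; nlinarith [abs_nonneg (genBinom (β-1) 0), hM 0]
      | succ p =>
          rw [sb_partial]
          rw [abs_mul, abs_pow, abs_neg, abs_one, one_pow, one_mul]
          nlinarith [hM p, abs_nonneg (genBinom (β-1) p)]
    have : ∑ k ∈ Finset.range m, |sb β (N + k)| = ε * ∑ k ∈ Finset.range m, sb β (N + k) := by
      rw [Finset.mul_sum]; exact Finset.sum_congr rfl fun k _ => hsign k
    rw [this]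
    have hsplit : ∑ k ∈ Finset.range m, sb β (N + k) = ∑ i ∈ Finset.range (N + m), sb β i - ∑ i ∈ Finset.range N, sb β i := by
      rw [Finset.sum_range_add]; ring
    have hεabs : |ε| ≤ 1 := by
      rw [hε]; rcases le_or_gt 0 (sb β N) with h|h
      · rw [if_pos h]; simp
      · rw [if_neg (not_le.2 h)]; simp
    calc ε * ∑ k ∈ Finset.range m, sb β (N + k) ≤ |ε * ∑ k ∈ Finset.range m, sb β (N + k)| := le_abs_self _
      _ = |ε| * |∑ k ∈ Finset.range m, sb β (N + k)| := abs_mul _ _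
      _ ≤ 1 * |∑ k ∈ Finset.range m, sb β (N + k)| := by
          exact mul_le_mul_of_nonneg_right hεabs (abs_nonneg _)
      _ = |∑ i ∈ Finset.range (N + m), sb β i - ∑ i ∈ Finset.range N, sb β i| := by rw [one_mul, hsplit]
      _ ≤ |∑ i ∈ Finset.range (N + m), sb β i| + |∑ i ∈ Finset.range N, sb β i| := abs_sub _ _
      _ ≤ 2 * M + 2 * M := add_le_add (hps _) (hps _)
  have h1 : Summable (fun k => |sb β (N + k)|) :=
    summable_of_sum_range_le (fun k => abs_nonneg _) hbound
  have h2 : Summable (fun k => |sb β (k + N)|) := by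
    apply h1.congr; intro k; rw [Nat.add_comm]
  exact (summable_nat_add_iff N).1 h2

lemma sb_rec (β : ℝ) (i : ℕ) : ((i : ℝ) + 1) * sb β (i + 1) = ((i : ℝ) - β) * sb β i := by
  rw [sb_succ]
  have h2 : ((i : ℝ) + 1) ≠ 0 := by positivity
  field_simp

lemma binomial_series (β : ℝ) (hβ : 0 < β) {x : ℝ} (hx0 : 0 ≤ x) (hx1 : x < 1) :
    HasSum (fun i => sb β i * x ^ i) ((1 - x) ^ β) := by
  have hs : Summable (fun i => |sb β i|) := summable_abs_sb β hβ
  set B : ℝ := ∑' i, |sb β i| with hBdef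
  have hB : ∀ i, |sb β i| ≤ B := fun i => Summable.le_tsum hs i (fun j _ => abs_nonneg _)
  have hB0 : 0 ≤ B := (abs_nonneg _).trans (hB 0)
  set a : ℝ := (x + 1) / 2 with ha
  have hxa : x < a := by rw [ha]; linarith
  have ha0 : 0 < a := by rw [ha]; linarith
  have ha1 : a < 1 := by rw [ha]; linarith
  have hna : ‖a‖ < 1 := by rw [Real.norm_eq_abs, abs_of_pos ha0]; exact ha1
  set t : Set ℝ := Set.Ioo (-a) a with ht
  have h0t : (0:ℝ) ∈ t := ⟨by linarith, ha0⟩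
  have hxt : x ∈ t := ⟨by linarith, hxa⟩
  set g : ℕ → ℝ → ℝ := fun i y => sb β i * y ^ i with hgdef
  set g' : ℕ → ℝ → ℝ := fun i y => sb β i * ((i : ℝ) * y ^ (i - 1)) with hg'def
  set u : ℕ → ℝ := fun i => (B / a) * ((i : ℝ) ^ 1 * a ^ i) with hu_def
  have hu : Summable u :=
    (summable_pow_mul_geometric_of_norm_lt_one 1 hna).mul_left (B / a)
  have hg : ∀ i y, y ∈ t → HasDerivAt (g i) (g' i y) y := fun i y _ =>
    (hasDerivAt_pow i y).const_mul (sb β i)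
  have hg' : ∀ i y, y ∈ t → ‖g' i y‖ ≤ u i := by
    intro i y hy
    have hya : |y| ≤ a := by
      rw [abs_le]; exact ⟨hy.1.le, hy.2.le⟩
    cases i with
    | zero => simp [hg'def, hu_def]
    | succ j =>
        have : ‖g' (j+1) y‖ = |sb β (j+1)| * ((j:ℝ) + 1) * |y| ^ j := by
          simp only [hg'def, Nat.add_sub_cancel]
          rw [Real.norm_eq_abs, abs_mul, abs_mul, abs_pow]
          rw [abs_of_nonneg (by positivity : (0:ℝ) ≤ ((j+1 : ℕ) : ℝ))]
          push_cast; ring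
        rw [this]
        have h1 : |y| ^ j ≤ a ^ j := pow_le_pow_left₀ (abs_nonneg _) hya j
        have h2 : |sb β (j+1)| * ((j:ℝ) + 1) * |y| ^ j ≤ B * ((j:ℝ) + 1) * a ^ j := by
          have hj : (0:ℝ) ≤ (j:ℝ) + 1 := by positivity
          exact mul_le_mul (mul_le_mul_of_nonneg_right (hB _) hj) h1
            (pow_nonneg (abs_nonneg y) j) (by positivity)
        refine h2.trans (le_of_eq ?_)
        simp only [hu_def]
        push_cast
        rw [pow_succ]
        field_simp
        ring
  have hg0 : Summable (fun i => g i 0) := by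
    apply Summable.of_norm_bounded hs
    intro i
    rw [Real.norm_eq_abs, hgdef]
    simp only [abs_mul, abs_pow, abs_zero]
    rcases Nat.eq_zero_or_pos i with h | h
    · subst h; simp
    · rw [zero_pow (Nat.pos_iff_ne_zero.1 h)]; simp [abs_nonneg]
  set f : ℝ → ℝ := fun y => ∑' i, g i y with hfdef
  set D : ℝ → ℝ := fun y => ∑' i, g' i y with hDdef
  have hf : ∀ y ∈ t, HasDerivAt f (D y) y := fun y hy =>
    hasDerivAt_tsum_of_isPreconnected hu isOpen_Ioo (convex_Ioo _ _).isPreconnected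
      hg hg' h0t hg0 hy
  -- summability at points of t
  have hgs : ∀ y ∈ t, Summable (fun i => g i y) := by
    intro y hy
    apply Summable.of_norm_bounded hs
    intro i
    rw [Real.norm_eq_abs, hgdef]
    simp only [abs_mul, abs_pow]
    have hya : |y| ≤ 1 := by
      rw [abs_le]; constructor <;> [linarith [hy.1]; linarith [hy.2]]
    calc |sb β i| * |y| ^ i ≤ |sb β i| * 1 := by
          exact mul_le_mul_of_nonneg_left (pow_le_one₀ (abs_nonneg _) hya) (abs_nonneg _)
      _ = |sb β i| := mul_one _
  have hg's : ∀ y ∈ t, Summable (fun i => g' i y) := fun y hy =>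
    Summable.of_norm_bounded hu (fun i => hg' i y hy)
  have hisb : ∀ y ∈ t, Summable (fun i : ℕ => (i:ℝ) * sb β i * y ^ i) := by
    intro y hy
    apply Summable.of_norm_bounded ((summable_pow_mul_geometric_of_norm_lt_one 1 hna).mul_left B)
    intro i
    have hya : |y| ≤ a := by rw [abs_le]; exact ⟨hy.1.le, hy.2.le⟩
    rw [Real.norm_eq_abs, abs_mul, abs_mul, abs_pow]
    rw [abs_of_nonneg (Nat.cast_nonneg i : (0:ℝ) ≤ (i:ℝ))]
    have h1 : |y| ^ i ≤ a ^ i := pow_le_pow_left₀ (abs_nonneg _) hya i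
    calc (i:ℝ) * |sb β i| * |y| ^ i ≤ (i:ℝ) * B * a ^ i := by
          exact mul_le_mul (mul_le_mul_of_nonneg_left (hB i) (Nat.cast_nonneg i)) h1
            (pow_nonneg (abs_nonneg y) i) (mul_nonneg (Nat.cast_nonneg i) hB0)
      _ = B * ((i:ℝ)^1 * a ^ i) := by ring
  -- the ODE
  have hode : ∀ y ∈ t, (1 - y) * D y = -β * f y := by
    intro y hy
    have hc : Summable (fun i => g' i y) := hg's y hy
    have hgy : Summable (fun i => g i y) := hgs y hy
    have hd : Summable (fun i => β * g i y - (i:ℝ) * sb β i * y ^ i) :=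
      (hgy.mul_left β).sub (hisb y hy)
    have key1 : ∀ i : ℕ, (1 - y) * g' i y + β * g i y =
        g' i y + (β * g i y - (i:ℝ) * sb β i * y ^ i) := by
      intro i
      cases i with
      | zero => simp [hg'def, hgdef]
      | succ j =>
          simp only [hg'def, hgdef, Nat.add_sub_cancel]
          push_cast
          ring
    have key2 : ∀ i : ℕ, g' (i + 1) y = -(β * g i y - (i:ℝ) * sb β i * y ^ i) := by
      intro i
      simp only [hg'def, hgdef, Nat.add_sub_cancel]
      have h := sb_rec β i
      push_cast
      linear_combination (y ^ i) * h
    have e1 : (1 - y) * D y + β * f y = ∑' i, ((1 - y) * g' i y + β * g i y) := by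
      rw [hDdef, hfdef, ← tsum_mul_left, ← tsum_mul_left]
      exact (Summable.tsum_add (hc.mul_left _) (hgy.mul_left _)).symm
    have e2 : ∑' i, ((1 - y) * g' i y + β * g i y) =
        (∑' i, g' i y) + ∑' i, (β * g i y - (i:ℝ) * sb β i * y ^ i) := by
      rw [← Summable.tsum_add hc hd]
      exact tsum_congr key1
    have e3 : (∑' i, g' i y) = - ∑' i, (β * g i y - (i:ℝ) * sb β i * y ^ i) := by
      rw [Summable.tsum_eq_zero_add hc]
      have : g' 0 y = 0 := by simp [hg'def]
      rw [this, zero_add, ← tsum_neg]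
      exact tsum_congr key2
    have : (1 - y) * D y + β * f y = 0 := by rw [e1, e2, e3]; ring
    linarith
  -- integrating factor
  set φ : ℝ → ℝ := fun y => f y * (1 - y) ^ (-β) with hφdef
  have hφ' : ∀ y ∈ Set.Icc (0:ℝ) x, HasDerivAt φ 0 y := by
    intro y hy
    have hyt : y ∈ t := ⟨by linarith [hy.1], by linarith [hy.2]⟩
    have h1y : (0:ℝ) < 1 - y := by linarith [hy.2]
    have hr : HasDerivAt (fun z : ℝ => (1 - z) ^ (-β)) (β * (1 - y) ^ (-β - 1)) y := by
      have h0 : HasDerivAt (fun z : ℝ => 1 - z) (-1) y := (hasDerivAt_id y).const_sub 1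
      have hp : HasDerivAt (fun w : ℝ => w ^ (-β)) ((-β) * (1 - y) ^ (-β - 1)) (1 - y) :=
        Real.hasDerivAt_rpow_const (Or.inl (ne_of_gt h1y))
      have := hp.comp y h0
      exact this.congr_deriv (by ring)
    have hmul := (hf y hyt).mul hr
    refine hmul.congr_deriv ?_
    have hsplit : (1 - y) ^ (-β) = (1 - y) ^ (-β - 1) * (1 - y) := by
      have h := Real.rpow_add h1y (-β - 1) 1
      rw [Real.rpow_one] at h
      rw [← h]
      ring_nf
    rw [hsplit]
    have := hode y hyt
    linear_combination ((1 - y) ^ (-β - 1)) * this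
  have hcont : ContinuousOn φ (Set.Icc 0 x) := fun y hy =>
    (hφ' y hy).continuousAt.continuousWithinAt
  have hconst := constant_of_has_deriv_right_zero hcont
    (fun y hy => (hφ' y (Set.mem_Icc.2 ⟨hy.1, hy.2.le⟩)).hasDerivWithinAt)
  have hend : φ x = φ 0 := hconst x (Set.mem_Icc.2 ⟨hx0, le_rfl⟩)
  have hf0 : f 0 = 1 := by
    have h : f 0 = ∑' i, g i 0 := rfl
    rw [h, tsum_eq_single 0 (fun b hb => by simp [hgdef, zero_pow hb])]
    simp [hgdef, sb, genBinom_zero]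
  have hφ0 : φ 0 = 1 := by
    simp [hφdef, hf0, Real.one_rpow]
  have h1x : (0:ℝ) < 1 - x := by linarith
  have hfx : f x = (1 - x) ^ β := by
    have h1 : f x * (1 - x) ^ (-β) = 1 := by
      have h2 : φ x = f x * (1 - x) ^ (-β) := rfl
      rw [← h2, hend, hφ0]
    have hne : (1 - x) ^ β ≠ 0 := ne_of_gt (Real.rpow_pos_of_pos h1x β)
    rw [Real.rpow_neg h1x.le] at h1
    exact (mul_inv_eq_one₀ hne).1 h1
  have hsum := (hgs x hxt).hasSum
  have heq : (∑' (b : ℕ), g b x) = (1 - x) ^ β := hfx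
  rw [heq] at hsum
  exact hsum

end Stmt14Aux

open Stmt14Aux

/-- For the maximum `X_(n:n)` of `n` i.i.d. copies of a nonnegative `X`,
whose CDF is `F(x)^n`, one has
`G_(X_(n:n))(α, β) = ∑ᵢ (-1)ⁱ C(β, i) H_X(n(i + α))`,
where `H_X(γ) = ∫_l^r F(x)^γ dx`. -/
theorem stmt14 (μ : Measure ℝ) [IsProbabilityMeasure μ]
    (hnn : μ (Iio 0) = 0) (n : ℕ) (hn : 0 < n)
    (α β : ℝ) (hα : 0 ≤ α) (hβ : 0 < β)
    (hD : memD (fun x => cdfOf μ x ^ (n : ℝ)) α β)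
    (hH : ∀ i : ℕ,
      IntegrableOn (fun x => cdfOf μ x ^ ((n : ℝ) * ((i : ℝ) + α))) (cigfSupport (cdfOf μ))) :
    cigf (fun x => cdfOf μ x ^ (n : ℝ)) α β =
      ∑' i : ℕ, (-1) ^ i * genBinom β i *
        ∫ x in cigfSupport (cdfOf μ), cdfOf μ x ^ ((n : ℝ) * ((i : ℝ) + α)) := by
  classical
  set F : ℝ → ℝ := cdfOf μ with hFdef
  have hF0 : ∀ x, 0 ≤ F x := fun x => ENNReal.toReal_nonneg
  have hF1 : ∀ x, F x ≤ 1 := by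
    intro x
    have h := prob_le_one (μ := μ) (s := Iic x)
    calc F x = (μ (Iic x)).toReal := rfl
      _ ≤ (1 : ℝ≥0∞).toReal := ENNReal.toReal_mono ENNReal.one_ne_top h
      _ = 1 := ENNReal.toReal_one
  have hFmono : Monotone F := by
    intro x y hxy
    exact ENNReal.toReal_mono (measure_ne_top μ _) (measure_mono (Iic_subset_Iic.2 hxy))
  have hFmeas : Measurable F := hFmono.measurable
  set S : Set ℝ := cigfSupport F with hSdef
  have hSmeas : MeasurableSet S := by
    have : S = F ⁻¹' (Set.Ioo 0 1) := by
      ext x; simp [hSdef, cigfSupport, Set.mem_Ioo]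
    rw [this]
    exact hFmeas (measurableSet_Ioo)
  have hn0 : (0:ℝ) < (n:ℝ) := by exact_mod_cast hn
  -- support equality
  have hSupp : cigfSupport (fun x => F x ^ (n : ℝ)) = S := by
    ext x
    simp only [cigfSupport, Set.mem_setOf_eq, hSdef]
    constructor
    · rintro ⟨h1, h2⟩
      have hx0 : 0 < F x := by
        rcases (hF0 x).lt_or_eq with h | h
        · exact h
        · exfalso; rw [← h, Real.zero_rpow (ne_of_gt hn0)] at h1; exact lt_irrefl 0 h1
      have hx1 : F x < 1 := by
        rcases (hF1 x).lt_or_eq with h | h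
        · exact h
        · exfalso; rw [h, Real.one_rpow] at h2; exact lt_irrefl 1 h2
      exact ⟨hx0, hx1⟩
    · rintro ⟨h1, h2⟩
      exact ⟨Real.rpow_pos_of_pos h1 _, Real.rpow_lt_one (hF0 x) h2 hn0⟩
  -- pointwise series expansion on S
  have hpt : ∀ x ∈ S, (F x ^ (n:ℝ)) ^ α * (1 - F x ^ (n:ℝ)) ^ β =
      ∑' i : ℕ, sb β i * F x ^ ((n : ℝ) * ((i : ℝ) + α)) := by
    intro x hx
    obtain ⟨ht0, ht1⟩ : 0 < F x ∧ F x < 1 := hx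
    set t : ℝ := F x ^ (n:ℝ) with htdef
    have htn0 : 0 < t := Real.rpow_pos_of_pos ht0 _
    have htn1 : t < 1 := Real.rpow_lt_one (hF0 x) ht1 hn0
    have hsum := (binomial_series β hβ htn0.le htn1).mul_right (t ^ α)
    have hterm : ∀ i : ℕ, sb β i * t ^ i * t ^ α = sb β i * F x ^ ((n : ℝ) * ((i : ℝ) + α)) := by
      intro i
      rw [mul_assoc, ← Real.rpow_natCast t i, ← Real.rpow_add htn0,
        htdef, ← Real.rpow_mul (hF0 x)]
    have hsum2 : HasSum (fun i : ℕ => sb β i * F x ^ ((n : ℝ) * ((i : ℝ) + α)))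
        ((1 - t) ^ β * t ^ α) := by
      have heq : (fun i : ℕ => sb β i * t ^ i * t ^ α) =
          (fun i : ℕ => sb β i * F x ^ ((n : ℝ) * ((i : ℝ) + α))) := funext hterm
      rw [← heq]
      exact hsum
    rw [hsum2.tsum_eq]
    ring
  -- the integral computation
  set e : ℕ → ℝ := fun i => (n : ℝ) * ((i : ℝ) + α) with hedef
  set f : ℕ → ℝ → ℝ := fun i x => sb β i * F x ^ e i with hfdef
  have hmeas : ∀ i, AEStronglyMeasurable (f i) (volume.restrict S) :=
    fun i => ((hH i).1.const_mul (sb β i))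
  have hnonneg : ∀ i x, (0:ℝ) ≤ F x ^ e i := fun i x => Real.rpow_nonneg (hF0 x) _
  have hbound : ∀ i : ℕ, (∫⁻ x, ‖F x ^ e i‖₊ ∂(volume.restrict S)) ≤
      ∫⁻ x, ‖F x ^ e 0‖₊ ∂(volume.restrict S) := by
    intro i
    refine lintegral_mono_ae ?_
    filter_upwards [ae_restrict_mem hSmeas] with x hx
    obtain ⟨hx0, hx1⟩ : 0 < F x ∧ F x < 1 := hx
    have hle : F x ^ e i ≤ F x ^ e 0 := by
      apply Real.rpow_le_rpow_of_exponent_ge hx0 hx1.le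
      simp only [hedef]
      push_cast
      nlinarith [hn0, Nat.cast_nonneg (α := ℝ) i]
    calc (‖F x ^ e i‖₊ : ℝ≥0∞) = ENNReal.ofReal (F x ^ e i) :=
          Real.enorm_eq_ofReal (hnonneg i x)
      _ ≤ ENNReal.ofReal (F x ^ e 0) := ENNReal.ofReal_le_ofReal hle
      _ = (‖F x ^ e 0‖₊ : ℝ≥0∞) := (Real.enorm_eq_ofReal (hnonneg 0 x)).symm
  have hfin0 : (∫⁻ x, ‖F x ^ e 0‖₊ ∂(volume.restrict S)) ≠ ∞ := (hH 0).2.ne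
  have hsb_sum : Summable (fun i => ‖sb β i‖₊) := by
    rw [← NNReal.summable_coe]
    have : (fun i => ((‖sb β i‖₊ : ℝ≥0) : ℝ)) = fun i => |sb β i| := by
      funext i; rw [coe_nnnorm, Real.norm_eq_abs]
    rw [this]
    exact summable_abs_sb β hβ
  have hstep1 : ∀ i, (∫⁻ x, ‖f i x‖₊ ∂(volume.restrict S)) =
      (‖sb β i‖₊ : ℝ≥0∞) * ∫⁻ x, ‖F x ^ e i‖₊ ∂(volume.restrict S) := by
    intro i
    rw [← lintegral_const_mul' _ _ ENNReal.coe_ne_top]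
    refine lintegral_congr fun x => ?_
    simp only [hfdef, nnnorm_mul, ENNReal.coe_mul]
  have hkey : (∑' i, ∫⁻ x, ‖f i x‖₊ ∂(volume.restrict S)) ≠ ∞ := by
    refine ne_top_of_le_ne_top
      (ENNReal.mul_ne_top (ENNReal.tsum_coe_ne_top_iff_summable.2 hsb_sum) hfin0) ?_
    calc (∑' i, ∫⁻ x, ‖f i x‖₊ ∂(volume.restrict S))
        = ∑' i, (‖sb β i‖₊ : ℝ≥0∞) * ∫⁻ x, ‖F x ^ e i‖₊ ∂(volume.restrict S) :=
          tsum_congr hstep1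
      _ ≤ ∑' i, (‖sb β i‖₊ : ℝ≥0∞) * ∫⁻ x, ‖F x ^ e 0‖₊ ∂(volume.restrict S) :=
          ENNReal.tsum_le_tsum (fun i => mul_le_mul_right (hbound i) _)
      _ = (∑' i, (‖sb β i‖₊ : ℝ≥0∞)) * ∫⁻ x, ‖F x ^ e 0‖₊ ∂(volume.restrict S) :=
          ENNReal.tsum_mul_right
  calc cigf (fun x => F x ^ (n:ℝ)) α β
      = ∫ x in S, (F x ^ (n:ℝ)) ^ α * (1 - F x ^ (n:ℝ)) ^ β := by
        rw [cigf, hSupp]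
    _ = ∫ x in S, ∑' i, f i x := setIntegral_congr_fun hSmeas (fun x hx => hpt x hx)
    _ = ∑' i, ∫ x in S, f i x := integral_tsum hmeas hkey
    _ = ∑' i : ℕ, (-1) ^ i * genBinom β i * ∫ x in S, F x ^ e i := by
        refine tsum_congr fun i => ?_
        rw [hfdef]
        simp only []
        rw [MeasureTheory.integral_const_mul]
        simp only [sb, mul_assoc]
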